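/- Quantitative ranking supermartingale bound: Let (Ω, ℱ, ℙ) be a probability space with a filtration (ℱ_i)_{i∈ℕ}, let T be a stopping time with respect to (ℱ_i), and let (X_i)_{i∈ℕ} be a sequence of integrable real-valued random variables such that each X_i is ℱ_i-measurable and X_i ≥ 0 almost surely. Suppose there exists ε > 0 such that for every i ∈ ℕ, 𝔼[X_{i+1} ∣ ℱ_i] ≤ X_i − ε·𝟙{T > i} almost surely. Then ε · 𝔼[T] ≤ 𝔼[X_0]; in particular 𝔼[T] is finite. -/

import Mathlib

open MeasureTheory Filter
open scoped ENNReal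

private lemma enat_coe_eq_tsum (n : ℕ∞) :
    (ENat.toENNReal n) = ∑' i : ℕ, (if (i : ℕ∞) < n then (1 : ℝ≥0∞) else 0) := by
  cases n with
  | top =>
    simp only [ENat.toENNReal_top]
    have : ∀ i : ℕ, (if (i : ℕ∞) < ⊤ then (1 : ℝ≥0∞) else 0) = 1 := by
      intro i; simp [lt_top_iff_ne_top]
    rw [tsum_congr this]
    exact (ENNReal.tsum_const_eq_top_of_ne_zero one_ne_zero).symm
  | coe k =>
    have h : ∀ i : ℕ, i ∉ Finset.range k → (if (i : ℕ∞) < (k : ℕ∞) then (1 : ℝ≥0∞) else 0) = 0 := by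
      intro i hi
      simp only [Finset.mem_range, not_lt] at hi
      rw [if_neg]
      exact not_lt.2 (by exact_mod_cast hi)
    rw [tsum_eq_sum h]
    have : ∀ i ∈ Finset.range k, (if (i : ℕ∞) < (k : ℕ∞) then (1 : ℝ≥0∞) else 0) = 1 := by
      intro i hi
      simp only [Finset.mem_range] at hi
      rw [if_pos (by exact_mod_cast hi)]
    rw [Finset.sum_congr rfl this]
    simp

/-- Quantitative ranking supermartingale bound: if `(X i)` is a sequence of nonnegative
integrable adapted random variables and `T` is a stopping time such that
`𝔼[X (i+1) ∣ ℱ i] ≤ X i - ε · 𝟙{T > i}` almost surely for every `i`, with `ε > 0`,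
then `ε · 𝔼[T] ≤ 𝔼[X 0]`; in particular the (a priori possibly infinite) expectation
`𝔼[T]` is finite. -/
theorem ranking_supermartingale_expectation_bound
    {Ω : Type*} {m0 : MeasurableSpace Ω} (μ : Measure Ω) [IsProbabilityMeasure μ]
    (ℱ : Filtration ℕ m0) (X : ℕ → Ω → ℝ) (T : Ω → ℕ∞)
    (hTstop : ∀ i : ℕ, MeasurableSet[ℱ i] {ω | T ω ≤ (i : ℕ∞)})
    (hadapted : ∀ i, StronglyMeasurable[ℱ i] (X i))
    (hint : ∀ i, Integrable (X i) μ)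
    (hnonneg : ∀ i, 0 ≤ᵐ[μ] X i)
    (ε : ℝ) (hε : 0 < ε)
    (hdec : ∀ i : ℕ, μ[X (i + 1)|ℱ i]
      ≤ᵐ[μ] fun ω => X i ω - ε * Set.indicator {ω' | (i : ℕ∞) < T ω'} (fun _ => (1 : ℝ)) ω) :
    ENNReal.ofReal ε * ∫⁻ ω, (ENat.toENNReal (T ω)) ∂μ ≤ ENNReal.ofReal (∫ ω, X 0 ω ∂μ)
      ∧ ∫⁻ ω, (ENat.toENNReal (T ω)) ∂μ < ⊤ := by
  set S : ℕ → Set Ω := fun i => {ω | (i : ℕ∞) < T ω} with hS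
  have hSmeas : ∀ i, MeasurableSet[ℱ i] (S i) := by
    intro i
    have : S i = {ω | T ω ≤ (i : ℕ∞)}ᶜ := by
      ext ω; simp [hS, not_le]
    rw [this]
    exact (hTstop i).compl
  have hSmeas0 : ∀ i, MeasurableSet (S i) := fun i => ℱ.le i _ (hSmeas i)
  -- step inequality on integrals
  have hstep : ∀ i : ℕ, ∫ ω, X (i + 1) ω ∂μ ≤ ∫ ω, X i ω ∂μ - ε * (μ (S i)).toReal := by
    intro i
    have hind : Integrable ((S i).indicator (fun _ => (1 : ℝ))) μ :=
      (integrable_const (1 : ℝ)).indicator (hSmeas0 i)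
    have hrhs : Integrable (fun ω => X i ω - ε * (S i).indicator (fun _ => (1 : ℝ)) ω) μ :=
      (hint i).sub (hind.const_mul ε)
    have h1 : ∫ ω, (μ[X (i + 1)|ℱ i]) ω ∂μ
        ≤ ∫ ω, (X i ω - ε * (S i).indicator (fun _ => (1 : ℝ)) ω) ∂μ :=
      integral_mono_ae integrable_condExp hrhs (hdec i)
    rw [integral_condExp (ℱ.le i)] at h1
    calc ∫ ω, X (i + 1) ω ∂μ
        ≤ ∫ ω, (X i ω - ε * (S i).indicator (fun _ => (1 : ℝ)) ω) ∂μ := h1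
      _ = ∫ ω, X i ω ∂μ - ε * ∫ ω, (S i).indicator (fun _ => (1 : ℝ)) ω ∂μ := by
          rw [integral_sub (hint i) (hind.const_mul ε), integral_const_mul]
      _ = ∫ ω, X i ω ∂μ - ε * (μ (S i)).toReal := by
          rw [integral_indicator_const (1 : ℝ) (hSmeas0 i)]; simp [Measure.real]
  -- telescoping
  have hmain : ∀ n : ℕ, ε * ∑ i ∈ Finset.range n, (μ (S i)).toReal ≤ ∫ ω, X 0 ω ∂μ := by
    intro n
    have key : ∀ n : ℕ,
        ε * ∑ i ∈ Finset.range n, (μ (S i)).toReal + ∫ ω, X n ω ∂μ ≤ ∫ ω, X 0 ω ∂μ := by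
      intro n
      induction n with
      | zero => simp
      | succ n ih =>
        have := hstep n
        rw [Finset.sum_range_succ, mul_add]
        linarith
    have hXn : 0 ≤ ∫ ω, X n ω ∂μ := integral_nonneg_of_ae (hnonneg n)
    linarith [key n]
  -- lintegral of T as a sum
  have hlint : ∫⁻ ω, (ENat.toENNReal (T ω)) ∂μ = ∑' i : ℕ, μ (S i) := by
    have h1 : ∀ ω, (ENat.toENNReal (T ω))
        = ∑' i : ℕ, (S i).indicator (fun _ => (1 : ℝ≥0∞)) ω := by
      intro ω
      rw [enat_coe_eq_tsum (T ω)]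
      refine tsum_congr fun i => ?_
      by_cases h : (i : ℕ∞) < T ω
      · rw [if_pos h]
        exact (Set.indicator_of_mem (show ω ∈ S i from h) (fun _ => (1:ℝ≥0∞))).symm
      · rw [if_neg h]
        exact (Set.indicator_of_notMem (show ω ∉ S i from h) (fun _ => (1:ℝ≥0∞))).symm
    calc ∫⁻ ω, (ENat.toENNReal (T ω)) ∂μ
        = ∫⁻ ω, ∑' i : ℕ, (S i).indicator (fun _ => (1 : ℝ≥0∞)) ω ∂μ := by
          exact lintegral_congr h1
      _ = ∑' i : ℕ, ∫⁻ ω, (S i).indicator (fun _ => (1 : ℝ≥0∞)) ω ∂μ :=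
          lintegral_tsum fun i =>
            ((measurable_const.indicator (hSmeas0 i))).aemeasurable
      _ = ∑' i : ℕ, μ (S i) := by
          refine tsum_congr fun i => ?_
          rw [lintegral_indicator_const (hSmeas0 i)]
          simp
  -- main bound
  have hbound : ENNReal.ofReal ε * ∫⁻ ω, (ENat.toENNReal (T ω)) ∂μ
      ≤ ENNReal.ofReal (∫ ω, X 0 ω ∂μ) := by
    rw [hlint, ENNReal.tsum_eq_iSup_sum]
    rw [ENNReal.mul_iSup]
    refine iSup_le fun s => ?_
    obtain ⟨n, hn⟩ := s.exists_nat_subset_range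
    have hsum_le : ∑ i ∈ s, μ (S i) ≤ ∑ i ∈ Finset.range n, μ (S i) :=
      Finset.sum_le_sum_of_subset hn
    refine le_trans (mul_le_mul_right hsum_le _) ?_
    have hfin : ∀ i : ℕ, μ (S i) ≠ ⊤ := fun i => measure_ne_top μ _
    have : ∑ i ∈ Finset.range n, μ (S i)
        = ENNReal.ofReal (∑ i ∈ Finset.range n, (μ (S i)).toReal) := by
      rw [ENNReal.ofReal_sum_of_nonneg (fun i _ => ENNReal.toReal_nonneg)]
      exact Finset.sum_congr rfl fun i _ => (ENNReal.ofReal_toReal (hfin i)).symm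
    rw [this, ← ENNReal.ofReal_mul hε.le]
    exact ENNReal.ofReal_le_ofReal (hmain n)
  refine ⟨hbound, ?_⟩
  by_contra htop
  rw [not_lt, top_le_iff] at htop
  rw [htop, ENNReal.mul_top (ENNReal.ofReal_pos.2 hε).ne'] at hbound
  exact ENNReal.ofReal_ne_top (top_le_iff.1 hbound)
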